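/- An arbitrary direct sum of co-Kasch right R-modules is again a co-Kasch module. -/

import Mathlib

def IsCoKasch (R : Type*) [Ring R] (M : Type*) [AddCommGroup M] [Module R M] : Prop :=
  ∀ (K : Submodule R M) (S : Submodule R (M ⧸ K)), IsSimpleModule R S →
    ∃ f : M →ₗ[R] S, Function.Surjective f

section Aux

variable {R : Type*} [Ring R]

/-- `T` is a quotient of a submodule of `M` (a "subfactor"). -/
def SubQuot (R : Type*) [Ring R] (M T : Type*) [AddCommGroup M] [Module R M]
    [AddCommGroup T] [Module R T] : Prop :=
  ∃ (P : Submodule R M) (f : ↥P →ₗ[R] T), Function.Surjective f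

variable {M N T Q : Type*} [AddCommGroup M] [Module R M] [AddCommGroup N] [Module R N]
  [AddCommGroup T] [Module R T] [AddCommGroup Q] [Module R Q]

lemma subQuot_of_le_range (f : M →ₗ[R] Q) (S : Submodule R Q)
    (hS : S ≤ LinearMap.range f) : SubQuot R M ↥S := by
  refine ⟨S.comap f, LinearMap.codRestrict S (f.domRestrict _) (fun x => x.2), ?_⟩
  rintro ⟨s, hs⟩
  obtain ⟨x, hx⟩ := hS hs
  exact ⟨⟨x, by simp [Submodule.mem_comap, hx, hs]⟩, by
    apply Subtype.ext; exact hx⟩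

lemma SubQuot.comp (h : SubQuot R M N) (g : N →ₗ[R] T) (hg : Function.Surjective g) :
    SubQuot R M T := by
  obtain ⟨P, f, hf⟩ := h
  exact ⟨P, g ∘ₗ f, hg.comp hf⟩

lemma SubQuot.of_surjective (g : M →ₗ[R] N) (hg : Function.Surjective g)
    (h : SubQuot R N T) : SubQuot R M T := by
  obtain ⟨P, f, hf⟩ := h
  refine ⟨P.comap g, f ∘ₗ LinearMap.codRestrict P (g.domRestrict _) (fun x => x.2), ?_⟩
  refine hf.comp ?_
  rintro ⟨p, hp⟩
  obtain ⟨x, hx⟩ := hg p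
  exact ⟨⟨x, by simp [Submodule.mem_comap, hx, hp]⟩, by apply Subtype.ext; exact hx⟩

lemma subQuot_sup (A B : Submodule R Q) (hT : IsSimpleModule R T)
    (h : SubQuot R ↥(A ⊔ B) T) : SubQuot R ↥A T ∨ SubQuot R ↥B T := by
  obtain ⟨P, f, hf⟩ := h
  -- the image of the "A-part" of P in T
  set PA : Submodule R ↥P :=
    (A.comap ((A ⊔ B).subtype ∘ₗ P.subtype)) with hPA
  set W : Submodule R T := PA.map f with hW
  haveI := hT
  rcases eq_bot_or_eq_top W with hbot | htop
  · -- W = ⊥ : S is reached from B through the quotient by A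
    right
    set ψ : ↥P →ₗ[R] Q ⧸ A := A.mkQ ∘ₗ (A ⊔ B).subtype ∘ₗ P.subtype with hψ
    have hker : LinearMap.ker ψ ≤ LinearMap.ker f := by
      intro x hx
      have hxA : x ∈ PA := by
        simpa [hψ, hPA, Submodule.Quotient.mk_eq_zero] using hx
      have : f x ∈ W := ⟨x, hxA, rfl⟩
      rw [hbot] at this
      simpa using this
    have hrange : LinearMap.range ψ ≤ LinearMap.range (A.mkQ ∘ₗ B.subtype) := by
      rintro y ⟨p, rfl⟩
      have hmem : ((p : ↥(A ⊔ B)) : Q) ∈ A ⊔ B := (p : ↥(A ⊔ B)).2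
      obtain ⟨a, ha, b, hb, hab⟩ := Submodule.mem_sup.mp hmem
      refine ⟨⟨b, hb⟩, ?_⟩
      simp only [hψ, LinearMap.comp_apply, Submodule.coe_subtype, Submodule.mkQ_apply]
      rw [← hab]
      rw [Submodule.Quotient.eq]
      simpa using ha
    have h1 : SubQuot R ↥B ↥(LinearMap.range ψ) :=
      subQuot_of_le_range (A.mkQ ∘ₗ B.subtype) _ hrange
    refine h1.comp ((LinearMap.ker ψ).liftQ f hker ∘ₗ ψ.quotKerEquivRange.symm.toLinearMap) ?_
    rw [LinearMap.coe_comp, LinearEquiv.coe_coe]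
    refine Function.Surjective.comp ?_ ψ.quotKerEquivRange.symm.surjective
    intro t
    obtain ⟨p, hp⟩ := hf t
    exact ⟨Submodule.Quotient.mk p, by simpa using hp⟩
  · -- W = ⊤ : S is reached from A
    left
    set ιA : ↥A →ₗ[R] ↥(A ⊔ B) := Submodule.inclusion le_sup_left with hιA
    refine ⟨P.comap ιA,
      f ∘ₗ LinearMap.codRestrict P (ιA.domRestrict _) (fun x => x.2), ?_⟩
    intro t
    have ht : t ∈ W := htop ▸ Submodule.mem_top
    obtain ⟨p, hpA, hpt⟩ := ht
    have hpAmem : ((p : ↥(A ⊔ B)) : Q) ∈ A := hpA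
    have hval : ιA ⟨((p : ↥(A ⊔ B)) : Q), hpAmem⟩ = (p : ↥(A ⊔ B)) := Subtype.ext rfl
    have hmem' : (⟨((p : ↥(A ⊔ B)) : Q), hpAmem⟩ : ↥A) ∈ P.comap ιA := by
      rw [Submodule.mem_comap, hval]
      exact p.2
    refine ⟨⟨⟨((p : ↥(A ⊔ B)) : Q), hpAmem⟩, hmem'⟩, ?_⟩
    have harg : (LinearMap.codRestrict P (ιA.domRestrict (P.comap ιA)) (fun x => x.2))
        ⟨⟨((p : ↥(A ⊔ B)) : Q), hpAmem⟩, hmem'⟩ = p := Subtype.ext hval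
    simp only [LinearMap.comp_apply, harg]
    exact hpt

lemma subQuot_biSup {ι : Type*} (F : Finset ι) (N : ι → Submodule R Q)
    (hT : IsSimpleModule R T) (h : SubQuot R ↥(⨆ i ∈ F, N i) T) :
    ∃ i ∈ F, SubQuot R ↥(N i) T := by
  classical
  induction F using Finset.induction_on with
  | empty =>
    exfalso
    rw [show (⨆ i ∈ (∅ : Finset _), N i) = ⊥ by simp] at h
    obtain ⟨P, f, hf⟩ := h
    have : Subsingleton T := by
      constructor
      intro a b
      obtain ⟨x, rfl⟩ := hf a
      obtain ⟨y, rfl⟩ := hf b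
      congr 1
      apply Subtype.ext
      apply Subtype.ext
      have hx := x.1.2
      have hy := y.1.2
      simp only [Submodule.mem_bot] at hx hy
      rw [hx, hy]
    haveI := hT
    haveI : Subsingleton (Submodule R T) := by infer_instance
    exact bot_ne_top (Subsingleton.elim (⊥ : Submodule R T) ⊤)
  | @insert a F ha ih =>
    rw [Finset.iSup_insert] at h
    rcases subQuot_sup _ _ hT h with h1 | h2
    · exact ⟨a, Finset.mem_insert_self a F, h1⟩
    · obtain ⟨i, hi, hsq⟩ := ih h2
      exact ⟨i, Finset.mem_insert_of_mem hi, hsq⟩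

lemma nontrivial_of_isSimpleModule (hT : IsSimpleModule R T) : Nontrivial T := by
  haveI := hT
  by_contra hn
  rw [not_nontrivial_iff_subsingleton] at hn
  exact bot_ne_top (Subsingleton.elim (⊥ : Submodule R T) ⊤)

lemma exists_surjective_of_subQuot (hM : IsCoKasch R M) (hT : IsSimpleModule R T)
    (h : SubQuot R M T) : ∃ g : M →ₗ[R] T, Function.Surjective g := by
  obtain ⟨P, f, hf⟩ := h
  set L : Submodule R M := (LinearMap.ker f).map P.subtype with hL
  set ψ : ↥P →ₗ[R] M ⧸ L := L.mkQ ∘ₗ P.subtype with hψ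
  have hker : LinearMap.ker ψ = LinearMap.ker f := by
    ext x
    simp only [hψ, LinearMap.mem_ker, LinearMap.comp_apply, Submodule.coe_subtype,
      Submodule.mkQ_apply, Submodule.Quotient.mk_eq_zero, hL, Submodule.mem_map]
    constructor
    · rintro ⟨y, hy, hyx⟩
      rwa [show y = x from Subtype.ext hyx] at hy
    · exact fun hx => ⟨x, hx, rfl⟩
  haveI := hT
  have e2 : (↥P ⧸ LinearMap.ker ψ) ≃ₗ[R] T :=
    (Submodule.quotEquivOfEq _ _ hker).trans (f.quotKerEquivOfSurjective hf)
  have e : ↥(LinearMap.range ψ) ≃ₗ[R] T := ψ.quotKerEquivRange.symm.trans e2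
  have hsimple : IsSimpleModule R ↥(LinearMap.range ψ) := IsSimpleModule.congr e
  obtain ⟨g, hg⟩ := hM L (LinearMap.range ψ) hsimple
  refine ⟨e.toLinearMap ∘ₗ g, ?_⟩
  rw [LinearMap.coe_comp, LinearEquiv.coe_coe]
  exact e.surjective.comp hg

end Aux

open DirectSum in
/-- An arbitrary direct sum of co-Kasch modules is co-Kasch. -/
theorem stmt5 (R : Type u) [Ring R] {ι : Type u} (M : ι → Type u)
    [∀ i, AddCommGroup (M i)] [∀ i, Module R (M i)]
    (h : ∀ i, IsCoKasch R (M i)) : IsCoKasch R (⨁ i, M i) := by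
  classical
  intro K S hS
  haveI : Nontrivial ↥S := nontrivial_of_isSimpleModule hS
  obtain ⟨s, hs⟩ := exists_ne (0 : ↥S)
  obtain ⟨x, hx⟩ := Submodule.Quotient.mk_surjective K (s : (⨁ i, M i) ⧸ K)
  set F := DFinsupp.support x with hF
  set N : Submodule R (⨁ i, M i) := ⨆ i ∈ F, LinearMap.range (lof R ι M i) with hN
  have hxN : x ∈ N := by
    rw [← DirectSum.sum_support_of x]
    apply Submodule.sum_mem
    intro i hi
    have hmem : (DirectSum.of M i) (x i) ∈ LinearMap.range (lof R ι M i) :=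
      ⟨x i, by rw [DirectSum.lof_eq_of]⟩
    exact Submodule.mem_iSup_of_mem i (Submodule.mem_iSup_of_mem hi hmem)
  have hsv : (s : (⨁ i, M i) ⧸ K) ∈ Submodule.map K.mkQ N :=
    ⟨x, hxN, by rw [Submodule.mkQ_apply]; exact hx⟩
  have hspan : S ≤ Submodule.map K.mkQ N := by
    have h2 : S ≤ Submodule.span R {((s : (⨁ i, M i) ⧸ K))} := by
      haveI := hS
      set W : Submodule R ↥S :=
        (Submodule.span R {((s : (⨁ i, M i) ⧸ K))}).comap S.subtype with hWdef
      have hWne : W ≠ ⊥ := by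
        intro hW0
        have hsW : s ∈ W := by
          rw [hWdef, Submodule.mem_comap]
          exact Submodule.subset_span rfl
        rw [hW0, Submodule.mem_bot] at hsW
        exact hs hsW
      have hWtop : W = ⊤ := (eq_bot_or_eq_top W).resolve_left hWne
      intro y hy
      have : (⟨y, hy⟩ : ↥S) ∈ W := hWtop ▸ Submodule.mem_top
      simpa [hWdef, Submodule.mem_comap] using this
    exact h2.trans (Submodule.span_le.mpr (Set.singleton_subset_iff.mpr hsv))
  have hrange : S ≤ LinearMap.range (K.mkQ ∘ₗ N.subtype) := by
    rw [LinearMap.range_comp, Submodule.range_subtype]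
    exact hspan
  have hsub : SubQuot R ↥N ↥S := subQuot_of_le_range _ _ hrange
  obtain ⟨i, hiF, hsubi⟩ :=
    subQuot_biSup F (fun i => LinearMap.range (lof R ι M i)) hS hsub
  have hsubMi : SubQuot R (M i) ↥S :=
    SubQuot.of_surjective (lof R ι M i).rangeRestrict
      (LinearMap.surjective_rangeRestrict _) hsubi
  obtain ⟨g, hg⟩ := exists_surjective_of_subQuot (h i) hS hsubMi
  refine ⟨g ∘ₗ (DirectSum.component R ι M i), ?_⟩
  rw [LinearMap.coe_comp]
  refine hg.comp ?_
  intro m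
  exact ⟨lof R ι M i m, by simp [DirectSum.component.of]⟩
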